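/- For the cycle graph C_n on n vertices with n odd, the cycle graph state is orthogonal to the empty graph state: ⟨G^∅|C_{2n+1}⟩ = 0, while for n even, |⟨G^∅|C_{2n}⟩|² = 1/2^{2n-2}. -/

import Mathlib

open scoped BigOperators

/-- The graph state amplitude function for edge set `E` on `n` qubits:
`|G⟩ = ∏ CZ |+⟩^⊗n`, whose amplitude on a computational basis state `x` is
`2^(-n/2)` times `(-1)` for every edge both of whose endpoints are in state `1`. -/
noncomputable def gs (n : ℕ) (E : Finset (Sym2 (Fin n))) : (Fin n → Fin 2) → ℂ :=
  fun x => ((Real.sqrt 2)⁻¹ : ℝ) ^ n *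
    ∏ e ∈ E, (if ∀ i ∈ e, x i = 1 then (-1 : ℂ) else 1)

/-- Inner product `⟨v|w⟩` on the `n`-qubit state space. -/
noncomputable def ip {n : ℕ} (v w : (Fin n → Fin 2) → ℂ) : ℂ :=
  ∑ x, (starRingEnd ℂ) (v x) * w x

/-- The edge set of the complete graph on `n` labeled vertices. -/
def completeEdges (n : ℕ) : Finset (Sym2 (Fin n)) :=
  Finset.univ.filter fun e => ¬ e.IsDiag

/-- The edge set of the cycle graph on `n` vertices. -/
def cycleEdges (n : ℕ) : Finset (Sym2 (Fin n)) :=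
  Finset.univ.filter fun e => ∃ a b : Fin n, e = s(a, b) ∧ ((a : ℕ) + 1) % n = (b : ℕ)

noncomputable def TT : Matrix (Fin 2) (Fin 2) ℂ := !![1, 1; 1, -1]

lemma TT_sq : TT ^ 2 = (2 : ℂ) • 1 := by
  ext i j
  fin_cases i <;> fin_cases j <;>
    simp [TT, pow_two, Matrix.mul_apply, Fin.sum_univ_two] <;> ring

lemma TT_if (u v : Fin 2) : TT u v = if u = 1 ∧ v = 1 then (-1 : ℂ) else 1 := by
  fin_cases u <;> fin_cases v <;> norm_num [TT]

lemma snoc_cons_succ {α : Type*} {m : ℕ} (a b : α) (y : Fin m → α) :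
    (Fin.snoc (Fin.cons a y) b : Fin (m + 2) → α) ∘ Fin.succ = Fin.snoc y b := by
  funext i
  refine Fin.lastCases ?_ (fun j => ?_) i
  · simp [Fin.succ_last]
  · simp [-Fin.castSucc_succ, Fin.succ_castSucc]

lemma sum_split {k : ℕ} (f : (Fin (k + 1) → Fin 2) → ℂ) :
    ∑ x, f x = ∑ c : Fin 2, ∑ x : Fin k → Fin 2, f (Fin.cons c x) := by
  rw [← (Fin.consEquiv (fun _ : Fin (k + 1) => Fin 2)).sum_comp, Fintype.sum_prod_type]
  rfl

lemma path_sum : ∀ (k : ℕ) (a b : Fin 2),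
    ∑ x : Fin k → Fin 2, ∏ i : Fin (k + 1),
      TT ((Fin.snoc (Fin.cons a x) b : Fin (k + 2) → Fin 2) i.castSucc)
         ((Fin.snoc (Fin.cons a x) b : Fin (k + 2) → Fin 2) i.succ)
    = (TT ^ (k + 1)) a b := by
  intro k
  induction k with
  | zero =>
    intro a b
    have key0 : ∀ x : Fin 0 → Fin 2, ∏ i : Fin 1,
        TT ((Fin.snoc (Fin.cons a x) b : Fin 2 → Fin 2) i.castSucc)
           ((Fin.snoc (Fin.cons a x) b : Fin 2 → Fin 2) i.succ) = TT a b := by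
      intro x
      rw [Fin.prod_univ_one]
      have h1 : (Fin.snoc (Fin.cons a x) b : Fin 2 → Fin 2) (0 : Fin 1).succ = b := by
        rw [show ((0 : Fin 1).succ) = Fin.last 1 from rfl, Fin.snoc_last]
      have h0 : (Fin.snoc (Fin.cons a x) b : Fin 2 → Fin 2) (0 : Fin 1).castSucc = a := by
        rw [Fin.snoc_castSucc]; simp
      rw [h0, h1]
    rw [Fintype.sum_subsingleton _ (fun i : Fin 0 => i.elim0), key0, pow_one]
  | succ k ih =>
    intro a b
    rw [sum_split (fun x => ∏ i : Fin (k + 2),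
      TT ((Fin.snoc (Fin.cons a x) b : Fin (k + 3) → Fin 2) i.castSucc)
         ((Fin.snoc (Fin.cons a x) b : Fin (k + 3) → Fin 2) i.succ))]
    have key : ∀ (c : Fin 2) (x : Fin k → Fin 2),
        (∏ i : Fin (k + 2),
          TT ((Fin.snoc (Fin.cons a (Fin.cons c x)) b : Fin (k + 3) → Fin 2) i.castSucc)
             ((Fin.snoc (Fin.cons a (Fin.cons c x)) b : Fin (k + 3) → Fin 2) i.succ))
        = TT a c * ∏ i : Fin (k + 1),
            TT ((Fin.snoc (Fin.cons c x) b : Fin (k + 2) → Fin 2) i.castSucc)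
               ((Fin.snoc (Fin.cons c x) b : Fin (k + 2) → Fin 2) i.succ) := by
      intro c x
      rw [Fin.prod_univ_succ]
      refine congrArg₂ (· * ·) ?_ ?_
      · have ha : (Fin.snoc (Fin.cons a (Fin.cons c x)) b : Fin (k + 3) → Fin 2) 0 = a := by
          rw [show (0 : Fin (k + 3)) = Fin.castSucc 0 from rfl, Fin.snoc_castSucc]
          simp
        have hc : (Fin.snoc (Fin.cons a (Fin.cons c x)) b : Fin (k + 3) → Fin 2) 1 = c := by
          rw [show (1 : Fin (k + 3)) = Fin.castSucc 1 from rfl, Fin.snoc_castSucc,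
            show (1 : Fin (k + 2)) = Fin.succ 0 from rfl, Fin.cons_succ]
          simp
        rw [show ((0 : Fin (k+2)).castSucc) = (0 : Fin (k+3)) from rfl,
          show ((0 : Fin (k+2)).succ) = (1 : Fin (k+3)) from rfl, ha, hc]
      · apply Finset.prod_congr rfl
        intro i _
        have h1 : (Fin.snoc (Fin.cons a (Fin.cons c x)) b : Fin (k + 3) → Fin 2) ∘ Fin.succ
            = Fin.snoc (Fin.cons c x) b := snoc_cons_succ a b (Fin.cons c x)
        have e1 : (Fin.snoc (Fin.cons a (Fin.cons c x)) b : Fin (k + 3) → Fin 2) i.succ.castSucc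
            = (Fin.snoc (Fin.cons c x) b : Fin (k + 2) → Fin 2) i.castSucc := by
          rw [← h1]
          simp only [Function.comp_apply, ← Fin.succ_castSucc]
        have e2 : (Fin.snoc (Fin.cons a (Fin.cons c x)) b : Fin (k + 3) → Fin 2) i.succ.succ
            = (Fin.snoc (Fin.cons c x) b : Fin (k + 2) → Fin 2) i.succ := by
          rw [← h1]; rfl
        rw [← e1, ← e2]
    calc ∑ c : Fin 2, ∑ x : Fin k → Fin 2, _ = ∑ c : Fin 2, TT a c * (TT ^ (k + 1)) c b := by
          apply Finset.sum_congr rfl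
          intro c _
          rw [← ih c b, Finset.mul_sum]
          exact Finset.sum_congr rfl fun x _ => key c x
      _ = (TT ^ (k + 2)) a b := by
          conv_rhs => rw [show (k + 2) = (k + 1) + 1 from rfl, pow_succ', Matrix.mul_apply]

lemma cycle_sum (k : ℕ) :
    ∑ x : Fin (k + 1) → Fin 2, ∏ i : Fin (k + 1), TT (x i) (x (i + 1))
      = Matrix.trace (TT ^ (k + 1)) := by
  rw [sum_split (fun x => ∏ i : Fin (k + 1), TT (x i) (x (i + 1))), Matrix.trace]
  apply Finset.sum_congr rfl
  intro a _
  rw [Matrix.diag_apply, ← path_sum k a a]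
  apply Finset.sum_congr rfl
  intro x _
  apply Finset.prod_congr rfl
  intro i _
  have e1 : (Fin.snoc (Fin.cons a x) a : Fin (k + 2) → Fin 2) i.castSucc
      = (Fin.cons a x : Fin (k + 1) → Fin 2) i := by
    simp
  have e2 : (Fin.snoc (Fin.cons a x) a : Fin (k + 2) → Fin 2) i.succ
      = (Fin.cons a x : Fin (k + 1) → Fin 2) (i + 1) := by
    refine Fin.lastCases ?_ (fun j => ?_) i
    · have : (Fin.last k + 1 : Fin (k + 1)) = 0 := by
        ext; simp [Fin.add_def]
      rw [this, Fin.succ_last]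
      simp
    · have : (j.castSucc + 1 : Fin (k + 1)) = j.succ := by
        ext
        rw [Fin.val_add_one_of_lt]
        · simp
        · exact Fin.castSucc_lt_last j
      rw [this, Fin.succ_castSucc]
      simp [-Fin.castSucc_succ]
  rw [← e1, ← e2]

lemma cycle_sum' (n : ℕ) [NeZero n] (h : 1 ≤ n) :
    ∑ x : Fin n → Fin 2, ∏ i : Fin n, TT (x i) (x (i + 1)) = Matrix.trace (TT ^ n) := by
  obtain ⟨k, rfl⟩ : ∃ k, n = k + 1 := ⟨n - 1, by omega⟩
  exact cycle_sum k

lemma TT_pow_even (m : ℕ) : TT ^ (2 * m) = ((2 : ℂ) ^ m) • (1 : Matrix (Fin 2) (Fin 2) ℂ) := by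
  induction m with
  | zero => simp
  | succ m ih =>
    have : 2 * (m + 1) = 2 * m + 2 := by ring
    rw [this, pow_add, ih, TT_sq, smul_mul_smul_comm, one_mul, pow_succ]

lemma trace_TT : Matrix.trace TT = 0 := by
  simp [Matrix.trace, Fin.sum_univ_two, TT]

lemma trace_TT_odd (m : ℕ) : Matrix.trace (TT ^ (2 * m + 1)) = 0 := by
  rw [pow_succ, TT_pow_even, Matrix.smul_mul, one_mul, Matrix.trace_smul, trace_TT, smul_zero]

lemma trace_TT_even (m : ℕ) : Matrix.trace (TT ^ (2 * m)) = (2 : ℂ) ^ (m + 1) := by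
  rw [TT_pow_even, Matrix.trace_smul, Matrix.trace_one, smul_eq_mul, pow_succ]
  norm_num

lemma cycleEdges_image (n : ℕ) [NeZero n] (hn : 3 ≤ n) :
    cycleEdges n = Finset.image (fun a : Fin n => s(a, a + 1)) Finset.univ := by
  have hone : ((1 : Fin n) : ℕ) = 1 := by rw [Fin.val_one']; exact Nat.mod_eq_of_lt (by omega)
  ext e
  simp only [cycleEdges, Finset.mem_filter, Finset.mem_univ, true_and, Finset.mem_image]
  constructor
  · rintro ⟨a, b, rfl, hb⟩
    refine ⟨a, ?_⟩
    have : a + 1 = b := by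
      apply Fin.ext
      rw [Fin.add_def, hone]
      exact hb
    rw [this]
  · rintro ⟨a, rfl⟩
    refine ⟨a, a + 1, rfl, ?_⟩
    rw [Fin.add_def, hone]

lemma cycle_inj (n : ℕ) [NeZero n] (hn : 3 ≤ n) :
    ∀ a ∈ (Finset.univ : Finset (Fin n)), ∀ c ∈ Finset.univ,
      s(a, a + 1) = s(c, c + 1) → a = c := by
  have hone : ((1 : Fin n) : ℕ) = 1 := by rw [Fin.val_one']; exact Nat.mod_eq_of_lt (by omega)
  intro a _ c _ h
  rw [Sym2.eq_iff] at h
  rcases h with ⟨h1, _⟩ | ⟨h1, h2⟩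
  · exact h1
  · exfalso
    have key : a = a + 1 + 1 := by nth_rw 1 [h1]; rw [← h2]
    rw [add_assoc] at key
    have h0 : (1 + 1 : Fin n) = 0 := (left_eq_add.mp key)
    have hv := congrArg Fin.val h0
    rw [Fin.add_def, hone] at hv
    simp only [Fin.val_zero] at hv
    rw [Nat.mod_eq_of_lt (by omega)] at hv
    simp at hv

lemma prod_cycle (n : ℕ) [NeZero n] (hn : 3 ≤ n) (x : Fin n → Fin 2) :
    ∏ e ∈ cycleEdges n, (if ∀ i ∈ e, x i = 1 then (-1 : ℂ) else 1)
      = ∏ a : Fin n, TT (x a) (x (a + 1)) := by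
  rw [cycleEdges_image n hn, Finset.prod_image (cycle_inj n hn)]
  apply Finset.prod_congr rfl
  intro a _
  rw [TT_if]
  apply if_congr ?_ rfl rfl
  constructor
  · intro h
    exact ⟨h a (by simp), h (a + 1) (by simp)⟩
  · rintro ⟨h1, h2⟩ i hi
    rcases Sym2.mem_iff.mp hi with rfl | rfl
    · exact h1
    · exact h2

lemma ip_eq (n : ℕ) [NeZero n] (hn : 3 ≤ n) :
    ip (gs n (∅ : Finset (Sym2 (Fin n)))) (gs n (cycleEdges n))
      = ((2 : ℂ)⁻¹) ^ n * Matrix.trace (TT ^ n) := by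
  rw [← cycle_sum' n (by omega), Finset.mul_sum]
  unfold ip gs
  apply Finset.sum_congr rfl
  intro x _
  rw [prod_cycle n hn x, Finset.prod_empty, mul_one]
  have hc : (starRingEnd ℂ) (((Real.sqrt 2)⁻¹ : ℝ) ^ n : ℂ) = (((Real.sqrt 2)⁻¹ : ℝ) ^ n : ℂ) := by
    rw [map_pow, Complex.conj_ofReal]
  rw [hc, ← mul_assoc, ← mul_pow]
  have h2 : (((Real.sqrt 2)⁻¹ : ℝ) : ℂ) * (((Real.sqrt 2)⁻¹ : ℝ) : ℂ) = (2 : ℂ)⁻¹ := by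
    rw [← Complex.ofReal_mul, ← mul_inv, Real.mul_self_sqrt (by norm_num : (0:ℝ) ≤ 2)]
    norm_num
  rw [h2]

/-- a cycle graph state on an odd number of vertices is orthogonal to
the empty graph state, while on 2m vertices the overlap is |⟨G^∅|C_{2m}⟩|² = 1/2^(2m-2). -/
theorem cycle_overlap_empty (n : ℕ) (hn : 3 ≤ n) :
    (Odd n → ip (gs n (∅ : Finset (Sym2 (Fin n)))) (gs n (cycleEdges n)) = 0) ∧
    (∀ m : ℕ, n = 2 * m →
      ‖ip (gs n (∅ : Finset (Sym2 (Fin n)))) (gs n (cycleEdges n))‖ ^ 2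
        = 1 / 2 ^ (2 * m - 2)) := by
  haveI : NeZero n := ⟨by omega⟩
  constructor
  · rintro ⟨m, rfl⟩
    rw [ip_eq _ hn, trace_TT_odd, mul_zero]
  · rintro m rfl
    have hm : 2 ≤ m := by omega
    rw [ip_eq _ hn, trace_TT_even, norm_mul, norm_pow, norm_pow, norm_inv, Complex.norm_two]
    rw [mul_pow, ← pow_mul, ← pow_mul, inv_pow]
    rw [eq_div_iff (by positivity), mul_assoc, ← pow_add, inv_mul_eq_div,
      div_eq_one_iff_eq (by positivity)]
    congr 1
    omega
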